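/- Let I, L ⊆ Π and let w ∈ W satisfy w⁻¹(Φ_L) ∩ Φ_I = ∅. Then w(Φ⁺ \ Φ_I) ∩ Φ_L is a closed subset of Φ_L whose union with its negative is a partition of Φ_L, and there exists a unique w' ∈ W_L such that w'(w(Φ⁺ \ Φ_I) ∩ Φ_L) = Φ_L⁺. -/

import Mathlib

variable {V : Type*} [NormedAddCommGroup V] [InnerProductSpace ℝ V]

/-- `Φ` is a finite reduced crystallographic root system spanning `V`. -/
structure IsRootSystem (Φ : Set V) : Prop where
  finite : Φ.Finite
  zero_not_mem : (0 : V) ∉ Φ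
  span_top : Submodule.span ℝ Φ = ⊤
  reduced : ∀ α ∈ Φ, ∀ c : ℝ, c • α ∈ Φ → c = 1 ∨ c = -1
  crystallographic : ∀ α ∈ Φ, ∀ β ∈ Φ,
    ∃ n : ℤ, 2 * (inner ℝ β α : ℝ) / (inner ℝ α α : ℝ) = (n : ℝ)
  reflect_mem : ∀ α ∈ Φ, ∀ β ∈ Φ,
    β - (2 * (inner ℝ β α : ℝ) / (inner ℝ α α : ℝ)) • α ∈ Φ

/-- `α` is a nonnegative linear combination of elements of `Δ`. -/
def IsNonnegComb (Δ : Set V) (α : V) : Prop :=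
  ∃ c : V →₀ ℝ, (c.support : Set V) ⊆ Δ ∧ (∀ v, 0 ≤ c v) ∧ α = c.sum fun v r => r • v

/-- `Δ` is a base (set of simple roots) of the root system `Φ`. -/
structure IsBase (Φ Δ : Set V) : Prop where
  subset : Δ ⊆ Φ
  indep : LinearIndependent ℝ (Subtype.val : Δ → V)
  pos_or_neg : ∀ α ∈ Φ, IsNonnegComb Δ α ∨ IsNonnegComb Δ (-α)

/-- The set of positive roots with respect to the base `Δ`. -/
def posRoots (Φ Δ : Set V) : Set V := {α ∈ Φ | IsNonnegComb Δ α}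

/-- The set of negative roots with respect to the base `Δ`. -/
def negRoots (Φ Δ : Set V) : Set V := {α ∈ Φ | IsNonnegComb Δ (-α)}

/-- `Φ_A := Φ ∩ span A`. -/
def rootsIn (Φ A : Set V) : Set V := Φ ∩ (Submodule.span ℝ A : Set V)

/-- `Φ_A⁺`. -/
def posRootsIn (Φ Δ A : Set V) : Set V := rootsIn Φ A ∩ posRoots Φ Δ

/-- `Φ_A⁻`. -/
def negRootsIn (Φ Δ A : Set V) : Set V := rootsIn Φ A ∩ negRoots Φ Δ

/-- `Γ` is a closed subset of `Φ`. -/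
def IsClosedSubset (Φ Γ : Set V) : Prop := ∀ α ∈ Γ, ∀ β ∈ Γ, α + β ∈ Φ → α + β ∈ Γ

/-- `X` and `Y` are orthogonal sets of vectors. -/
def OrthogonalSets (X Y : Set V) : Prop := ∀ α ∈ X, ∀ β ∈ Y, (inner ℝ α β : ℝ) = 0

/-- The group generated by the reflections `s α`, `α ∈ A`. -/
def weylGroupOf (A : Set V) (s : V → V ≃ₗ[ℝ] V) : Subgroup (V ≃ₗ[ℝ] V) :=
  Subgroup.closure (s '' A)

/-- `s α` is the orthogonal reflection in the root `α`, for every `α ∈ Φ`. -/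
def IsReflectionFamily (Φ : Set V) (s : V → V ≃ₗ[ℝ] V) : Prop :=
  ∀ α ∈ Φ, ∀ x : V, s α x = x - (2 * (inner ℝ x α : ℝ) / (inner ℝ α α : ℝ)) • α

section Part1
variable {Φ Δ : Set V}

theorem rs_inner_self_pos (hΦ : IsRootSystem Φ) {α : V} (hα : α ∈ Φ) :
    0 < (inner ℝ α α : ℝ) := by
  have h0 : α ≠ 0 := fun h => hΦ.zero_not_mem (h ▸ hα)
  exact lt_of_le_of_ne real_inner_self_nonneg (Ne.symm (inner_self_ne_zero.2 h0))

theorem rs_neg_mem (hΦ : IsRootSystem Φ) {α : V} (hα : α ∈ Φ) : -α ∈ Φ := by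
  have h := hΦ.reflect_mem α hα α hα
  have hne : (inner ℝ α α : ℝ) ≠ 0 := ne_of_gt (rs_inner_self_pos hΦ hα)
  rw [mul_div_assoc, div_self hne, mul_one] at h
  have : α - (2:ℝ) • α = -α := by
    rw [two_smul]; abel
  rwa [this] at h

theorem rs_repr_unique (hΔ : IsBase Φ Δ) {c d : V →₀ ℝ}
    (hc : (c.support : Set V) ⊆ Δ) (hd : (d.support : Set V) ⊆ Δ)
    (h : (c.sum fun v r => r • v) = d.sum fun v r => r • v) : c = d := by
  classical
  have hi := linearIndepOn_iff.1 (linearIndependent_subtype_iff.1 hΔ.indep)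
  have hmem : c - d ∈ Finsupp.supported ℝ ℝ Δ := by
    rw [Finsupp.mem_supported]
    intro x hx
    rcases Finset.mem_union.1 (Finsupp.support_sub hx) with h' | h'
    · exact hc h'
    · exact hd h'
  have hz : (Finsupp.linearCombination ℝ id) (c - d) = 0 := by
    rw [map_sub, Finsupp.linearCombination_apply, Finsupp.linearCombination_apply]
    simp only [id]
    rw [h, sub_self]
  have := hi (c - d) hmem hz
  exact sub_eq_zero.1 this

theorem rs_nonneg_add {x y : V} (hx : IsNonnegComb Δ x) (hy : IsNonnegComb Δ y) :
    IsNonnegComb Δ (x + y) := by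
  classical
  obtain ⟨c, hc1, hc2, hc3⟩ := hx
  obtain ⟨d, hd1, hd2, hd3⟩ := hy
  refine ⟨c + d, ?_, fun v => add_nonneg (hc2 v) (hd2 v), ?_⟩
  · intro x hx
    rcases Finset.mem_union.1 (Finsupp.support_add (by exact_mod_cast hx)) with h' | h'
    · exact hc1 h'
    · exact hd1 h'
  · rw [hc3, hd3]
    exact (Finsupp.sum_add_index' (fun v => zero_smul ℝ v) (fun v r₁ r₂ => add_smul r₁ r₂ v)).symm

theorem rs_single_nonneg {a : V} (ha : a ∈ Δ) : IsNonnegComb Δ a := by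
  classical
  refine ⟨Finsupp.single a (1:ℝ), ?_, ?_, ?_⟩
  · intro x hx
    have hx' : x ∈ (Finsupp.single a (1:ℝ)).support := by exact_mod_cast hx
    rw [Finsupp.support_single_ne_zero a one_ne_zero] at hx'
    simp only [Finset.mem_singleton] at hx'
    exact hx' ▸ ha
  · intro v
    rw [Finsupp.single_apply]
    split <;> norm_num
  · rw [Finsupp.sum_single_index (zero_smul ℝ a), one_smul]

theorem rs_pos_neg_disjoint (hΦ : IsRootSystem Φ) (hΔ : IsBase Φ Δ) {α : V} (hα : α ∈ Φ)
    (h1 : IsNonnegComb Δ α) (h2 : IsNonnegComb Δ (-α)) : False := by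
  classical
  obtain ⟨c, hc1, hc2, hc3⟩ := h1
  obtain ⟨d, hd1, hd2, hd3⟩ := h2
  have hsum : ((c + d).sum fun v r => r • v) = (0 : V →₀ ℝ).sum fun v r => r • v := by
    rw [Finsupp.sum_add_index' (fun v => zero_smul ℝ v) (fun v r₁ r₂ => add_smul r₁ r₂ v)]
    rw [← hc3, ← hd3]
    simp
  have hsupp : ((c + d).support : Set V) ⊆ Δ := by
    intro x hx
    rcases Finset.mem_union.1 (Finsupp.support_add (by exact_mod_cast hx)) with h' | h'
    · exact hc1 h'
    · exact hd1 h'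
  have hcd := rs_repr_unique hΔ hsupp (by simp) hsum
  have hc0 : c = 0 := by
    ext v
    have h0 : c v + d v = 0 := by
      have := Finsupp.ext_iff.1 hcd v
      simpa using this
    have := hc2 v; have := hd2 v
    simp only [Finsupp.coe_zero, Pi.zero_apply]
    linarith
  rw [hc0] at hc3
  simp at hc3
  exact hΦ.zero_not_mem (hc3 ▸ hα)

theorem rs_pos_or_neg (hΦ : IsRootSystem Φ) (hΔ : IsBase Φ Δ) {α : V} (hα : α ∈ Φ) :
    α ∈ posRoots Φ Δ ∨ α ∈ negRoots Φ Δ := by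
  rcases hΔ.pos_or_neg α hα with h | h
  · exact Or.inl ⟨hα, h⟩
  · exact Or.inr ⟨hα, h⟩

theorem rs_neg_of_pos (hΦ : IsRootSystem Φ) {α : V} (h : α ∈ posRoots Φ Δ) :
    -α ∈ negRoots Φ Δ := ⟨rs_neg_mem hΦ h.1, by rw [neg_neg]; exact h.2⟩

theorem rs_pos_of_neg (hΦ : IsRootSystem Φ) {α : V} (h : α ∈ negRoots Φ Δ) :
    -α ∈ posRoots Φ Δ := ⟨rs_neg_mem hΦ h.1, h.2⟩

theorem rs_not_pos_and_neg (hΦ : IsRootSystem Φ) (hΔ : IsBase Φ Δ) {α : V}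
    (h1 : α ∈ posRoots Φ Δ) (h2 : α ∈ negRoots Φ Δ) : False :=
  rs_pos_neg_disjoint hΦ hΔ h1.1 h1.2 h2.2

end Part1
section Part2
variable {Φ : Set V} {s : V → V ≃ₗ[ℝ] V}

theorem rs_s_self (hΦ : IsRootSystem Φ) (hs : IsReflectionFamily Φ s) {α : V} (hα : α ∈ Φ) :
    s α α = -α := by
  rw [hs α hα α, mul_div_assoc, div_self (ne_of_gt (rs_inner_self_pos hΦ hα)), mul_one, two_smul]
  abel

theorem rs_s_invol (hΦ : IsRootSystem Φ) (hs : IsReflectionFamily Φ s) {α : V} (hα : α ∈ Φ)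
    (x : V) : s α (s α x) = x := by
  have hA : (inner ℝ α α : ℝ) ≠ 0 := ne_of_gt (rs_inner_self_pos hΦ hα)
  rw [hs α hα x, hs α hα _, inner_sub_left, real_inner_smul_left]
  have h : 2 * ((inner ℝ x α : ℝ) - 2 * (inner ℝ x α : ℝ) / (inner ℝ α α : ℝ) * (inner ℝ α α : ℝ))
      / (inner ℝ α α : ℝ) = -(2 * (inner ℝ x α : ℝ) / (inner ℝ α α : ℝ)) := by
    field_simp
    ring
  rw [h, neg_smul]
  abel

theorem rs_s_mul_self (hΦ : IsRootSystem Φ) (hs : IsReflectionFamily Φ s) {α : V} (hα : α ∈ Φ) :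
    s α * s α = 1 :=
  LinearEquiv.toLinearMap_injective (LinearMap.ext fun x => rs_s_invol hΦ hs hα x)

theorem rs_s_inv (hΦ : IsRootSystem Φ) (hs : IsReflectionFamily Φ s) {α : V} (hα : α ∈ Φ) :
    (s α)⁻¹ = s α :=
  inv_eq_of_mul_eq_one_right (rs_s_mul_self hΦ hs hα)

theorem rs_s_root (hΦ : IsRootSystem Φ) (hs : IsReflectionFamily Φ s) {α β : V} (hα : α ∈ Φ)
    (hβ : β ∈ Φ) : s α β ∈ Φ := by
  rw [hs α hα β]
  exact hΦ.reflect_mem α hα β hβ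

theorem rs_s_inner (hΦ : IsRootSystem Φ) (hs : IsReflectionFamily Φ s) {α : V} (hα : α ∈ Φ)
    (x y : V) : (inner ℝ (s α x) (s α y) : ℝ) = (inner ℝ x y : ℝ) := by
  have hA : (inner ℝ α α : ℝ) ≠ 0 := ne_of_gt (rs_inner_self_pos hΦ hα)
  rw [hs α hα x, hs α hα y, inner_sub_left, inner_sub_right, inner_sub_right,
    real_inner_smul_left, real_inner_smul_left, real_inner_smul_right, real_inner_smul_right,
    real_inner_comm α y]
  field_simp
  ring

theorem rs_s_span {A : Set V} (hΦ : IsRootSystem Φ) (hs : IsReflectionFamily Φ s) (hA : A ⊆ Φ)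
    {α x : V} (hα : α ∈ A) (hx : x ∈ Submodule.span ℝ A) : s α x ∈ Submodule.span ℝ A := by
  rw [hs α (hA hα) x]
  exact Submodule.sub_mem _ hx (Submodule.smul_mem _ _ (Submodule.subset_span hα))

/-- product of reflections along a list -/
def rsProd (s : V → V ≃ₗ[ℝ] V) (l : List V) : V ≃ₗ[ℝ] V := (l.map s).prod

theorem rsProd_nil : rsProd s ([] : List V) = 1 := rfl

theorem rsProd_cons (a : V) (l : List V) : rsProd s (a :: l) = s a * rsProd s l := by
  simp [rsProd]

theorem rsProd_append (l₁ l₂ : List V) : rsProd s (l₁ ++ l₂) = rsProd s l₁ * rsProd s l₂ := by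
  simp [rsProd]

theorem rsProd_inv (hΦ : IsRootSystem Φ) (hs : IsReflectionFamily Φ s) {A : Set V} (hA : A ⊆ Φ)
    {l : List V} (hl : ∀ x ∈ l, x ∈ A) : (rsProd s l)⁻¹ = rsProd s l.reverse := by
  induction l with
  | nil => simp [rsProd]
  | cons a l ih =>
    rw [rsProd_cons, mul_inv_rev, ih (fun x hx => hl x (List.mem_cons_of_mem a hx)),
      rs_s_inv hΦ hs (hA (hl a (List.mem_cons_self))), List.reverse_cons, rsProd_append]
    simp [rsProd]

theorem rs_mem_weyl_iff (hΦ : IsRootSystem Φ) (hs : IsReflectionFamily Φ s) {A : Set V}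
    (hA : A ⊆ Φ) {w : V ≃ₗ[ℝ] V} :
    w ∈ weylGroupOf A s ↔ ∃ l : List V, (∀ x ∈ l, x ∈ A) ∧ w = rsProd s l := by
  constructor
  · intro hw
    induction hw using Subgroup.closure_induction with
    | mem x hx =>
      obtain ⟨a, ha, rfl⟩ := hx
      exact ⟨[a], by simpa using ha, by simp [rsProd]⟩
    | one => exact ⟨[], by simp, rfl⟩
    | mul x y hx hy ihx ihy =>
      obtain ⟨l₁, hl₁, rfl⟩ := ihx
      obtain ⟨l₂, hl₂, rfl⟩ := ihy
      exact ⟨l₁ ++ l₂, fun x hx => (List.mem_append.1 hx).elim (hl₁ x) (hl₂ x),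
        (rsProd_append l₁ l₂).symm⟩
    | inv x hx ihx =>
      obtain ⟨l, hl, rfl⟩ := ihx
      exact ⟨l.reverse, fun x hx => hl x (List.mem_reverse.1 hx), rsProd_inv hΦ hs hA hl⟩
  · rintro ⟨l, hl, rfl⟩
    induction l with
    | nil => exact one_mem _
    | cons a l ih =>
      rw [rsProd_cons]
      exact mul_mem (Subgroup.subset_closure ⟨a, hl a (List.mem_cons_self), rfl⟩)
        (ih fun x hx => hl x (List.mem_cons_of_mem a hx))

theorem rsProd_root (hΦ : IsRootSystem Φ) (hs : IsReflectionFamily Φ s) {A : Set V} (hA : A ⊆ Φ)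
    {l : List V} (hl : ∀ x ∈ l, x ∈ A) {β : V} (hβ : β ∈ Φ) : rsProd s l β ∈ Φ := by
  induction l with
  | nil => simpa [rsProd]
  | cons a l ih =>
    rw [rsProd_cons]
    exact rs_s_root hΦ hs (hA (hl a (List.mem_cons_self)))
      (ih fun x hx => hl x (List.mem_cons_of_mem a hx))

theorem rsProd_span (hΦ : IsRootSystem Φ) (hs : IsReflectionFamily Φ s) {A : Set V} (hA : A ⊆ Φ)
    {l : List V} (hl : ∀ x ∈ l, x ∈ A) {x : V} (hx : x ∈ Submodule.span ℝ A) :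
    rsProd s l x ∈ Submodule.span ℝ A := by
  induction l with
  | nil => simpa [rsProd]
  | cons a l ih =>
    rw [rsProd_cons]
    exact rs_s_span hΦ hs hA (hl a (List.mem_cons_self))
      (ih fun y hy => hl y (List.mem_cons_of_mem a hy))

theorem rsProd_inner (hΦ : IsRootSystem Φ) (hs : IsReflectionFamily Φ s) {A : Set V} (hA : A ⊆ Φ)
    {l : List V} (hl : ∀ x ∈ l, x ∈ A) (x y : V) :
    (inner ℝ (rsProd s l x) (rsProd s l y) : ℝ) = (inner ℝ x y : ℝ) := by
  induction l with
  | nil => simp [rsProd]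
  | cons a l ih =>
    rw [rsProd_cons]
    show (inner ℝ (s a (rsProd s l x)) (s a (rsProd s l y)) : ℝ) = _
    rw [rs_s_inner hΦ hs (hA (hl a (List.mem_cons_self)))]
    exact ih fun z hz => hl z (List.mem_cons_of_mem a hz)

theorem rs_weyl_root (hΦ : IsRootSystem Φ) (hs : IsReflectionFamily Φ s) {A : Set V} (hA : A ⊆ Φ)
    {w : V ≃ₗ[ℝ] V} (hw : w ∈ weylGroupOf A s) {β : V} (hβ : β ∈ Φ) : w β ∈ Φ := by
  obtain ⟨l, hl, rfl⟩ := (rs_mem_weyl_iff hΦ hs hA).1 hw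
  exact rsProd_root hΦ hs hA hl hβ

theorem rs_weyl_span (hΦ : IsRootSystem Φ) (hs : IsReflectionFamily Φ s) {A : Set V} (hA : A ⊆ Φ)
    {w : V ≃ₗ[ℝ] V} (hw : w ∈ weylGroupOf A s) {x : V} (hx : x ∈ Submodule.span ℝ A) :
    w x ∈ Submodule.span ℝ A := by
  obtain ⟨l, hl, rfl⟩ := (rs_mem_weyl_iff hΦ hs hA).1 hw
  exact rsProd_span hΦ hs hA hl hx

end Part2
section Part3
variable {Φ Δ : Set V} {s : V → V ≃ₗ[ℝ] V}

theorem rs_sum_eq_single_smul {c : V →₀ ℝ} {α : V} (h : ∀ v, v ≠ α → c v = 0) :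
    (c.sum fun v r => r • v) = c α • α := by
  classical
  rw [Finsupp.sum]
  by_cases hmem : α ∈ c.support
  · rw [Finset.sum_eq_single α (fun v _ hvne => by rw [h v hvne, zero_smul])
      (fun hα' => absurd hmem hα')]
  · have hz : ∀ v ∈ c.support, c v • v = 0 := fun v hv => by
      rcases eq_or_ne v α with rfl | hvne
      · exact absurd hv hmem
      · rw [h v hvne, zero_smul]
    rw [Finset.sum_congr rfl hz, Finset.sum_const_zero, Finsupp.notMem_support_iff.1 hmem,
      zero_smul]

theorem rs_nonneg_in_span (hΔ : IsBase Φ Δ) {L : Set V} (hL : L ⊆ Δ) {β : V}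
    (hpos : IsNonnegComb Δ β) (hspan : β ∈ Submodule.span ℝ L) : IsNonnegComb L β := by
  obtain ⟨c, hc1, hc2, hc3⟩ := hpos
  obtain ⟨d, hd1, hd2⟩ := Submodule.mem_span_set.1 hspan
  have hcd : c = d := rs_repr_unique hΔ hc1 (Set.Subset.trans hd1 hL) (by rw [← hc3, hd2])
  exact ⟨c, by rw [hcd]; exact hd1, hc2, hc3⟩

theorem rs_s_perm (hΦ : IsRootSystem Φ) (hΔ : IsBase Φ Δ) (hs : IsReflectionFamily Φ s)
    {α β : V} (hαΔ : α ∈ Δ) (hβ : β ∈ posRoots Φ Δ) (hne : β ≠ α) :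
    s α β ∈ posRoots Φ Δ := by
  classical
  have hαΦ : α ∈ Φ := hΔ.subset hαΔ
  have hβΦ : β ∈ Φ := hβ.1
  have hsβ : s α β ∈ Φ := rs_s_root hΦ hs hαΦ hβΦ
  rcases rs_pos_or_neg hΦ hΔ hsβ with h | h
  · exact h
  exfalso
  set k : ℝ := 2 * (inner ℝ β α : ℝ) / (inner ℝ α α : ℝ) with hk
  have hsαβ : s α β = β - k • α := hs α hαΦ β
  obtain ⟨c, hc1, hc2, hc3⟩ := hβ.2
  obtain ⟨e, he1, he2, he3⟩ := h.2
  have hsum : ((c + e).sum fun v r => r • v) = ((Finsupp.single α k).sum fun v r => r • v) := by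
    rw [Finsupp.sum_add_index' (fun v => zero_smul ℝ v) (fun v r₁ r₂ => add_smul r₁ r₂ v),
      Finsupp.sum_single_index (zero_smul ℝ α), ← hc3, ← he3, hsαβ]
    abel
  have hsupp : ((c + e).support : Set V) ⊆ Δ := by
    intro x hx
    rcases Finset.mem_union.1 (Finsupp.support_add (by exact_mod_cast hx)) with h' | h'
    · exact hc1 h'
    · exact he1 h'
  have hsupp2 : ((Finsupp.single α k).support : Set V) ⊆ Δ := by
    intro x hx
    have : x ∈ (Finsupp.single α k).support := by exact_mod_cast hx
    have := Finsupp.support_single_subset this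
    simp only [Finset.mem_singleton] at this
    exact this ▸ hαΔ
  have hce := rs_repr_unique hΔ hsupp hsupp2 hsum
  have hczero : ∀ v, v ≠ α → c v = 0 := by
    intro v hv
    have h0 : c v + e v = 0 := by
      have h' := Finsupp.ext_iff.1 hce v
      rw [Finsupp.add_apply, Finsupp.single_apply, if_neg (fun h => hv h.symm)] at h'
      exact h'
    have := hc2 v; have := he2 v
    linarith
  have hβeq : β = c α • α := by
    rw [hc3]; exact rs_sum_eq_single_smul hczero
  have hred := hΦ.reduced α hαΦ (c α) (by rw [← hβeq]; exact hβΦ)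
  rcases hred with h1 | h1
  · rw [h1, one_smul] at hβeq
    exact hne hβeq
  · rw [h1] at hβeq
    have hβneg : β ∈ negRoots Φ Δ := by
      refine ⟨hβΦ, ?_⟩
      rw [hβeq]
      simpa using rs_single_nonneg hαΔ
    exact rs_not_pos_and_neg hΦ hΔ hβ hβneg
  
theorem rs_s_perm_neg (hΦ : IsRootSystem Φ) (hΔ : IsBase Φ Δ) (hs : IsReflectionFamily Φ s)
    {α β : V} (hαΔ : α ∈ Δ) (hβ : β ∈ negRoots Φ Δ) (hne : β ≠ -α) :
    s α β ∈ negRoots Φ Δ := by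
  have h1 : -β ∈ posRoots Φ Δ := rs_pos_of_neg hΦ hβ
  have h2 : -β ≠ α := fun h => hne (by rw [← h, neg_neg])
  have h3 := rs_s_perm hΦ hΔ hs hαΔ h1 h2
  rw [map_neg] at h3
  have := rs_neg_of_pos hΦ (Δ := Δ) h3
  rwa [neg_neg] at this

theorem rs_sub_mem (hΦ : IsRootSystem Φ) {α β : V} (hα : α ∈ Φ) (hβ : β ∈ Φ)
    (hp : 0 < (inner ℝ β α : ℝ)) (hne : β ≠ α) : β - α ∈ Φ := by
  obtain ⟨m, hm⟩ := hΦ.crystallographic α hα β hβ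
  obtain ⟨n, hn⟩ := hΦ.crystallographic β hβ α hα
  have hA : (0:ℝ) < inner ℝ α α := rs_inner_self_pos hΦ hα
  have hB : (0:ℝ) < inner ℝ β β := rs_inner_self_pos hΦ hβ
  have hab : (inner ℝ α β : ℝ) = inner ℝ β α := real_inner_comm β α
  have hm1 : 1 ≤ m := by
    have : (0:ℝ) < (m:ℝ) := by rw [← hm]; positivity
    exact_mod_cast this
  have hn1 : 1 ≤ n := by
    have : (0:ℝ) < (n:ℝ) := by rw [← hn, hab]; positivity
    exact_mod_cast this
  have hcs : (inner ℝ β α : ℝ) * inner ℝ β α ≤ inner ℝ β β * inner ℝ α α := real_inner_mul_inner_self_le β α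
  have hmn : m * n ≤ 4 := by
    have h4 : (m:ℝ) * n ≤ 4 := by
      rw [← hm, ← hn, hab]
      rw [div_mul_div_comm]
      rw [div_le_iff₀ (by positivity)]
      nlinarith
    exact_mod_cast h4
  rcases eq_or_lt_of_le hm1 with hm2 | hm2
  · -- m = 1
    have h1 : 2 * (inner ℝ β α : ℝ) / (inner ℝ α α : ℝ) = 1 := by rw [hm, ← hm2]; norm_num
    have := hΦ.reflect_mem α hα β hβ
    rwa [h1, one_smul] at this
  rcases eq_or_lt_of_le hn1 with hn2 | hn2
  · -- n = 1
    have h1 : 2 * (inner ℝ α β : ℝ) / (inner ℝ β β : ℝ) = 1 := by rw [hn, ← hn2]; norm_num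
    have h2 := hΦ.reflect_mem β hβ α hα
    rw [h1, one_smul] at h2
    have := rs_neg_mem hΦ h2
    rwa [neg_sub] at this
  -- m, n ≥ 2
  exfalso
  have hm2' : m = 2 := by nlinarith
  have hn2' : n = 2 := by nlinarith
  have hpA : (inner ℝ β α : ℝ) = inner ℝ α α := by
    have : 2 * (inner ℝ β α : ℝ) / (inner ℝ α α : ℝ) = 2 := by rw [hm, hm2']; norm_num
    field_simp at this
    linarith
  have hpB : (inner ℝ β α : ℝ) = inner ℝ β β := by
    have : 2 * (inner ℝ α β : ℝ) / (inner ℝ β β : ℝ) = 2 := by rw [hn, hn2']; norm_num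
    field_simp at this
    linarith [hab]
  have hz : (inner ℝ (β - α) (β - α) : ℝ) = 0 := by
    rw [real_inner_sub_sub_self]
    linarith
  have := inner_self_eq_zero.1 hz
  exact hne (by rwa [sub_eq_zero] at this)

theorem rs_exists_height (hΔ : IsBase Φ Δ) : ∃ f : V →ₗ[ℝ] ℝ, ∀ v ∈ Δ, f v = 1 := by
  classical
  let b := Module.Basis.extend (linearIndependent_subtype_iff.1 hΔ.indep)
  let g : ↥((linearIndependent_subtype_iff.1 hΔ.indep).extend (Set.subset_univ Δ)) → ℝ := fun i => if (i : V) ∈ Δ then 1 else 0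
  refine ⟨(Finsupp.linearCombination ℝ g).comp (b.repr : V ≃ₗ[ℝ] _).toLinearMap, ?_⟩
  intro v hv
  have hmem : v ∈ (linearIndependent_subtype_iff.1 hΔ.indep).extend (Set.subset_univ Δ) :=
    (linearIndependent_subtype_iff.1 hΔ.indep).subset_extend (Set.subset_univ Δ) hv
  have h1 : b ⟨v, hmem⟩ = v := Module.Basis.extend_apply_self (linearIndependent_subtype_iff.1 hΔ.indep) ⟨v, hmem⟩
  have hrepr : b.repr v = Finsupp.single (⟨v, hmem⟩ : ↥((linearIndependent_subtype_iff.1 hΔ.indep).extend (Set.subset_univ Δ))) 1 := by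
    have h2 := b.repr_self (⟨v, hmem⟩ : ↥((linearIndependent_subtype_iff.1 hΔ.indep).extend (Set.subset_univ Δ)))
    rw [h1] at h2
    exact h2
  show (Finsupp.linearCombination ℝ g) (b.repr v) = 1
  rw [hrepr, Finsupp.linearCombination_single, one_smul]
  simp [g, hv]

theorem rs_conj (hΦ : IsRootSystem Φ) (hs : IsReflectionFamily Φ s) {A : Set V} (hA : A ⊆ Φ)
    {l : List V} (hl : ∀ x ∈ l, x ∈ A) {a c : V} (ha : a ∈ Φ) (hc : c ∈ Φ)
    (hac : rsProd s l a = c) : rsProd s l * s a * (rsProd s l)⁻¹ = s c := by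
  refine LinearEquiv.toLinearMap_injective (LinearMap.ext fun x => ?_)
  set v := rsProd s l with hv
  have h1 : (v * s a * v⁻¹) x = v (s a (v.symm x)) := rfl
  have happ : v (v.symm x) = x := v.apply_symm_apply x
  have hinner1 : (inner ℝ (v.symm x) a : ℝ) = inner ℝ x c := by
    rw [← rsProd_inner hΦ hs hA hl (v.symm x) a, ← hv, happ, hac]
  have hinner2 : (inner ℝ a a : ℝ) = inner ℝ c c := by
    rw [← rsProd_inner hΦ hs hA hl a a, ← hv, hac]
  show (v * s a * v⁻¹) x = s c x
  rw [h1, hs a ha, map_sub, map_smul, happ, hinner1, hinner2, hac, hs c hc x]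
end Part3
section Part4
variable {Φ Δ : Set V} {s : V → V ≃ₗ[ℝ] V}

theorem rs_exists_neg_simple (hΦ : IsRootSystem Φ) (hΔ : IsBase Φ Δ)
    (hs : IsReflectionFamily Φ s) {L : Set V} (hL : L ⊆ Δ) {C : Set V}
    (hCsub : C ⊆ rootsIn Φ L) (hCcl : IsClosedSubset (rootsIn Φ L) C)
    (hCpart : ∀ γ ∈ rootsIn Φ L, γ ∈ C ∨ -γ ∈ C) {γ₀ : V} (hγ₀C : γ₀ ∈ C)
    (hγ₀neg : γ₀ ∈ negRoots Φ Δ) : ∃ α ∈ L, -α ∈ C := by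
  classical
  obtain ⟨f, hf⟩ := rs_exists_height hΔ
  set S : Set V := {β : V | β ∈ posRoots Φ Δ ∧ β ∈ Submodule.span ℝ L ∧ -β ∈ C} with hS
  have hSne : S.Nonempty := by
    refine ⟨-γ₀, rs_pos_of_neg hΦ hγ₀neg, Submodule.neg_mem _ (hCsub hγ₀C).2, ?_⟩
    rwa [neg_neg]
  have hSfin : S.Finite := hΦ.finite.subset fun β hβ => hβ.1.1
  obtain ⟨β, hβS, hβmin⟩ := Set.exists_min_image S f hSfin hSne
  obtain ⟨hβpos, hβspan, hβC⟩ := hβS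
  have hβΦ : β ∈ Φ := hβpos.1
  -- find α ∈ L with positive inner product with β
  obtain ⟨c, hc1, hc2, hc3⟩ := rs_nonneg_in_span hΔ hL hβpos.2 hβspan
  have hsumβ : (∑ a ∈ c.support, c a • a) = β := by rw [hc3]; rfl
  have hex : ∃ α ∈ L, 0 < (inner ℝ β α : ℝ) := by
    by_contra hno
    push_neg at hno
    have hle : (inner ℝ β β : ℝ) ≤ 0 := by
      rw [hc3, Finsupp.sum, sum_inner]
      refine Finset.sum_nonpos fun v hv => ?_
      rw [real_inner_smul_left, hsumβ, real_inner_comm]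
      exact mul_nonpos_of_nonneg_of_nonpos (hc2 v) (hno v (hc1 hv))
    exact absurd (rs_inner_self_pos hΦ hβΦ) (not_lt.2 hle)
  obtain ⟨α, hαL, hβα⟩ := hex
  have hαΔ : α ∈ Δ := hL hαL
  have hαΦ : α ∈ Φ := hΔ.subset hαΔ
  by_cases hβeqα : β = α
  · exact ⟨α, hαL, by rw [← hβeqα]; exact hβC⟩
  -- β - α is a root
  have hsub : β - α ∈ Φ := rs_sub_mem hΦ hαΦ hβΦ hβα hβeqα
  have hsubspan : β - α ∈ Submodule.span ℝ L :=
    Submodule.sub_mem _ hβspan (Submodule.subset_span hαL)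
  -- β - α is positive
  have hsubpos : β - α ∈ posRoots Φ Δ := by
    rcases rs_pos_or_neg hΦ hΔ hsub with h | h
    · exact h
    exfalso
    have hsubneg : -(β - α) ∈ Submodule.span ℝ L := Submodule.neg_mem _ hsubspan
    obtain ⟨e, he1, he2, he3⟩ := rs_nonneg_in_span hΔ hL h.2 hsubneg
    have hsum : ((c + e).sum fun v r => r • v) = ((Finsupp.single α (1:ℝ)).sum fun v r => r • v) := by
      rw [Finsupp.sum_add_index' (fun v => zero_smul ℝ v) (fun v r₁ r₂ => add_smul r₁ r₂ v),
        Finsupp.sum_single_index (zero_smul ℝ α), ← hc3, ← he3, one_smul]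
      abel
    have hsupp : ((c + e).support : Set V) ⊆ Δ := by
      intro x hx
      rcases Finset.mem_union.1 (Finsupp.support_add (by exact_mod_cast hx)) with h' | h'
      · exact hL (hc1 h')
      · exact hL (he1 h')
    have hsupp2 : ((Finsupp.single α (1:ℝ)).support : Set V) ⊆ Δ := by
      intro x hx
      have hx' : x ∈ (Finsupp.single α (1:ℝ)).support := by exact_mod_cast hx
      have := Finsupp.support_single_subset hx'
      simp only [Finset.mem_singleton] at this
      exact this ▸ hαΔ
    have hce := rs_repr_unique hΔ hsupp hsupp2 hsum
    have hczero : ∀ v, v ≠ α → c v = 0 := by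
      intro v hv
      have h' := Finsupp.ext_iff.1 hce v
      rw [Finsupp.add_apply, Finsupp.single_apply, if_neg (fun h'' => hv h''.symm)] at h'
      have := hc2 v; have := he2 v
      linarith
    have hβeq : β = c α • α := by rw [hc3]; exact rs_sum_eq_single_smul hczero
    rcases hΦ.reduced α hαΦ (c α) (by rw [← hβeq]; exact hβΦ) with h1 | h1
    · rw [h1, one_smul] at hβeq; exact hβeqα hβeq
    · rw [h1, neg_one_smul] at hβeq
      rw [hβeq] at hβα
      rw [inner_neg_left] at hβα
      exact absurd (rs_inner_self_pos hΦ hαΦ) (by linarith)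
  -- now use closedness / partition
  rcases hCpart α ⟨hαΦ, Submodule.subset_span hαL⟩ with hαC | hαC
  · -- α ∈ C : then -(β - α) ∈ C, contradicting minimality
    exfalso
    have hmem : -β + α ∈ rootsIn Φ L := by
      have h1 : -β + α = -(β - α) := by abel
      exact ⟨h1 ▸ rs_neg_mem hΦ hsub, h1 ▸ Submodule.neg_mem _ hsubspan⟩
    have hclosed : -β + α ∈ C := hCcl (-β) hβC α hαC hmem
    have hmemS : β - α ∈ S := by
      refine ⟨hsubpos, hsubspan, ?_⟩
      have h1 : -(β - α) = -β + α := by abel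
      rw [h1]; exact hclosed
    have hfα : f α = 1 := hf α hαΔ
    have := hβmin (β - α) hmemS
    rw [map_sub, hfα] at this
    linarith
  · exact ⟨α, hαL, hαC⟩

end Part4
section Part5
variable {Φ Δ : Set V} {s : V → V ≃ₗ[ℝ] V}

theorem rs_simple_posIn (hΔ : IsBase Φ Δ) {L : Set V} (hL : L ⊆ Δ) {a : V} (ha : a ∈ L) :
    a ∈ posRootsIn Φ Δ L :=
  ⟨⟨hΔ.subset (hL ha), Submodule.subset_span ha⟩, ⟨hΔ.subset (hL ha), rs_single_nonneg (hL ha)⟩⟩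

theorem rs_deletion_aux (hΦ : IsRootSystem Φ) (hΔ : IsBase Φ Δ) (hs : IsReflectionFamily Φ s)
    {L : Set V} (hL : L ⊆ Δ) :
    ∀ m : List V, (∀ x ∈ m, x ∈ L) → ∀ a ∈ L, rsProd s m a ∈ negRoots Φ Δ →
    ∃ m₁ c m₂, m = m₁ ++ c :: m₂ ∧ rsProd s m₂ a = c := by
  have hLΦ : L ⊆ Φ := fun x hx => hΔ.subset (hL hx)
  intro m
  induction m with
  | nil =>
    intro _ a ha hneg
    exact absurd hneg (fun h => rs_not_pos_and_neg hΦ hΔ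
      ⟨hLΦ ha, rs_single_nonneg (hL ha)⟩ (by simpa [rsProd] using h))
  | cons b m ih =>
    intro hm a ha hneg
    have hmL : ∀ x ∈ m, x ∈ L := fun x hx => hm x (List.mem_cons_of_mem b hx)
    have hbL : b ∈ L := hm b (List.mem_cons_self)
    by_cases h : rsProd s m a ∈ negRoots Φ Δ
    · obtain ⟨m₁, c, m₂, heq, h2⟩ := ih hmL a ha h
      exact ⟨b :: m₁, c, m₂, by rw [heq]; rfl, h2⟩
    · have hroot : rsProd s m a ∈ Φ := rsProd_root hΦ hs hLΦ hmL (hLΦ ha)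
      have hpos : rsProd s m a ∈ posRoots Φ Δ := (rs_pos_or_neg hΦ hΔ hroot).resolve_right h
      have hcons : rsProd s (b :: m) a = s b (rsProd s m a) := by rw [rsProd_cons]; rfl
      rw [hcons] at hneg
      -- s b of a positive root is negative only if the root is b
      have heqb : rsProd s m a = b := by
        by_contra hne
        exact rs_not_pos_and_neg hΦ hΔ (rs_s_perm hΦ hΔ hs (hL hbL) hpos hne) hneg
      exact ⟨[], b, m, rfl, heqb⟩

theorem rs_stab_aux (hΦ : IsRootSystem Φ) (hΔ : IsBase Φ Δ) (hs : IsReflectionFamily Φ s)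
    {L : Set V} (hL : L ⊆ Δ) :
    ∀ n : ℕ, ∀ l : List V, l.length ≤ n → (∀ x ∈ l, x ∈ L) →
    (∀ γ ∈ posRootsIn Φ Δ L, rsProd s l γ ∈ posRootsIn Φ Δ L) → rsProd s l = 1 := by
  have hLΦ : L ⊆ Φ := fun x hx => hΔ.subset (hL hx)
  intro n
  induction n with
  | zero =>
    intro l hlen _ _
    rw [List.eq_nil_of_length_eq_zero (Nat.le_zero.1 hlen)]
    rfl
  | succ n ih =>
    intro l hlen hlL hfix
    rcases List.eq_nil_or_concat l with rfl | ⟨m, a, rfl⟩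
    · rfl
    simp only [List.concat_eq_append] at hlen hlL hfix ⊢
    have hmL : ∀ x ∈ m, x ∈ L := fun x hx => hlL x (by simp [hx])
    have haL : a ∈ L := hlL a (by simp)
    have haΦ : a ∈ Φ := hLΦ haL
    have hu_split : rsProd s (m ++ [a]) = rsProd s m * s a := by
      rw [rsProd_append]
      simp [rsProd]
    have hua : rsProd s (m ++ [a]) a ∈ posRootsIn Φ Δ L := hfix a (rs_simple_posIn hΔ hL haL)
    have hma : rsProd s m a = -(rsProd s (m ++ [a]) a) := by
      rw [hu_split]
      show rsProd s m a = -(rsProd s m (s a a))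
      rw [rs_s_self hΦ hs haΦ, map_neg, neg_neg]
    have hneg : rsProd s m a ∈ negRoots Φ Δ := by
      rw [hma]
      exact rs_neg_of_pos hΦ hua.2
    obtain ⟨m₁, c, m₂, heq, h2⟩ := rs_deletion_aux hΦ hΔ hs hL m hmL a haL hneg
    have hm₂L : ∀ x ∈ m₂, x ∈ L := fun x hx => hmL x (by rw [heq]; simp [hx])
    have hm₁L : ∀ x ∈ m₁, x ∈ L := fun x hx => hmL x (by rw [heq]; simp [hx])
    have hcL : c ∈ L := hmL c (by rw [heq]; simp)
    have hconj : rsProd s m₂ * s a * (rsProd s m₂)⁻¹ = s c :=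
      rs_conj hΦ hs hLΦ hm₂L haΦ (hLΦ hcL) h2
    have hsa2 : s a * s a = 1 := rs_s_mul_self hΦ hs haΦ
    have h5 : s c * rsProd s m₂ * s a = rsProd s m₂ := by
      rw [← hconj, inv_mul_cancel_right, mul_assoc, hsa2, mul_one]
    have hu_eq : rsProd s (m ++ [a]) = rsProd s (m₁ ++ m₂) := by
      rw [hu_split, heq, rsProd_append, rsProd_cons, rsProd_append]
      calc rsProd s m₁ * (s c * rsProd s m₂) * s a
          = rsProd s m₁ * (s c * rsProd s m₂ * s a) := by rw [mul_assoc]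
        _ = rsProd s m₁ * rsProd s m₂ := by rw [h5]
    rw [hu_eq]
    refine ih (m₁ ++ m₂) ?_ (fun x hx => (List.mem_append.1 hx).elim (hm₁L x) (hm₂L x)) ?_
    · have h6 : m.length = m₁.length + m₂.length + 1 := by rw [heq]; simp; omega
      have h7 : (m ++ [a]).length ≤ n + 1 := hlen
      simp only [List.length_append, List.length_singleton] at h7
      simp only [List.length_append]
      omega
    · intro γ hγ
      rw [← hu_eq]
      exact hfix γ hγ

theorem rs_stab (hΦ : IsRootSystem Φ) (hΔ : IsBase Φ Δ) (hs : IsReflectionFamily Φ s)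
    {L : Set V} (hL : L ⊆ Δ) {u : V ≃ₗ[ℝ] V} (hu : u ∈ weylGroupOf L s)
    (hfix : ∀ γ ∈ posRootsIn Φ Δ L, u γ ∈ posRootsIn Φ Δ L) : u = 1 := by
  have hLΦ : L ⊆ Φ := fun x hx => hΔ.subset (hL hx)
  obtain ⟨l, hlL, rfl⟩ := (rs_mem_weyl_iff hΦ hs hLΦ).1 hu
  exact rs_stab_aux hΦ hΔ hs hL l.length l le_rfl hlL hfix

end Part5
section Part6
variable {Φ Δ : Set V} {s : V → V ≃ₗ[ℝ] V}

theorem rs_empty_case (hΦ : IsRootSystem Φ) (hΔ : IsBase Φ Δ) {L : Set V} {C : Set V}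
    (hCsub : C ⊆ rootsIn Φ L) (hCpart : ∀ γ ∈ rootsIn Φ L, γ ∈ C ∨ -γ ∈ C)
    (hemp : C ∩ negRoots Φ Δ = ∅) : C = posRootsIn Φ Δ L := by
  apply Set.Subset.antisymm
  · intro γ hγ
    refine ⟨hCsub hγ, ?_⟩
    rcases rs_pos_or_neg hΦ hΔ (hCsub hγ).1 with h | h
    · exact h
    · exfalso
      have hmem : γ ∈ C ∩ negRoots Φ Δ := ⟨hγ, h⟩
      rw [hemp] at hmem
      exact Set.notMem_empty _ hmem
  · intro γ hγ
    rcases hCpart γ hγ.1 with h | h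
    · exact h
    · exfalso
      have : -γ ∈ C ∩ negRoots Φ Δ := ⟨h, rs_neg_of_pos hΦ hγ.2⟩
      rw [hemp] at this
      exact Set.notMem_empty _ this

theorem rs_exists_pos (hΦ : IsRootSystem Φ) (hΔ : IsBase Φ Δ) (hs : IsReflectionFamily Φ s)
    {L : Set V} (hL : L ⊆ Δ) :
    ∀ n : ℕ, ∀ C : Set V, C ⊆ rootsIn Φ L → IsClosedSubset (rootsIn Φ L) C →
    (∀ γ ∈ rootsIn Φ L, γ ∈ C ∨ -γ ∈ C) → (∀ γ, γ ∈ C → -γ ∈ C → False) →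
    (C ∩ negRoots Φ Δ).ncard ≤ n →
    ∃ w' ∈ weylGroupOf L s, ⇑w' '' C = posRootsIn Φ Δ L := by
  have hLΦ : L ⊆ Φ := fun x hx => hΔ.subset (hL hx)
  have hone : ∀ C : Set V, ⇑(1 : V ≃ₗ[ℝ] V) '' C = C := fun C => by
    rw [show ⇑(1 : V ≃ₗ[ℝ] V) = id from rfl, Set.image_id]
  intro n
  induction n with
  | zero =>
    intro C hCsub hCcl hCpart hCdisj hcard
    have hfin : (C ∩ negRoots Φ Δ).Finite := hΦ.finite.subset (fun x hx => (hCsub hx.1).1)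
    have hemp : C ∩ negRoots Φ Δ = ∅ := by
      rw [← Set.ncard_eq_zero hfin]
      omega
    exact ⟨1, one_mem _, by rw [hone C]; exact rs_empty_case hΦ hΔ hCsub hCpart hemp⟩
  | succ n ih =>
    intro C hCsub hCcl hCpart hCdisj hcard
    have hfin : (C ∩ negRoots Φ Δ).Finite := hΦ.finite.subset (fun x hx => (hCsub hx.1).1)
    by_cases hemp : C ∩ negRoots Φ Δ = ∅
    · exact ⟨1, one_mem _, by rw [hone C]; exact rs_empty_case hΦ hΔ hCsub hCpart hemp⟩
    obtain ⟨γ₀, hγ₀C, hγ₀neg⟩ := Set.nonempty_iff_ne_empty.2 hemp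
    obtain ⟨α, hαL, hαC⟩ := rs_exists_neg_simple hΦ hΔ hs hL hCsub hCcl hCpart hγ₀C hγ₀neg
    have hαΔ : α ∈ Δ := hL hαL
    have hαΦ : α ∈ Φ := hΔ.subset hαΔ
    have hαpos : α ∈ posRoots Φ Δ := ⟨hαΦ, rs_single_nonneg hαΔ⟩
    have hinvol : ∀ x : V, s α (s α x) = x := rs_s_invol hΦ hs hαΦ
    set C' : Set V := ⇑(s α) '' C with hC'
    have hsub' : C' ⊆ rootsIn Φ L := by
      rintro x ⟨y, hy, rfl⟩
      exact ⟨rs_s_root hΦ hs hαΦ (hCsub hy).1, rs_s_span hΦ hs hLΦ hαL (hCsub hy).2⟩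
    have hcl' : IsClosedSubset (rootsIn Φ L) C' := by
      rintro x₁ ⟨y₁, hy₁, rfl⟩ x₂ ⟨y₂, hy₂, rfl⟩ hsum
      have h12 : s α (y₁ + y₂) = s α y₁ + s α y₂ := map_add _ _ _
      have hy12 : y₁ + y₂ ∈ rootsIn Φ L := by
        have he : y₁ + y₂ = s α (s α y₁ + s α y₂) := by rw [← h12, hinvol]
        exact ⟨he ▸ rs_s_root hΦ hs hαΦ hsum.1, he ▸ rs_s_span hΦ hs hLΦ hαL hsum.2⟩
      exact ⟨y₁ + y₂, hCcl y₁ hy₁ y₂ hy₂ hy12, h12⟩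
    have hpart' : ∀ γ ∈ rootsIn Φ L, γ ∈ C' ∨ -γ ∈ C' := by
      intro γ hγ
      have hsγ : s α γ ∈ rootsIn Φ L :=
        ⟨rs_s_root hΦ hs hαΦ hγ.1, rs_s_span hΦ hs hLΦ hαL hγ.2⟩
      rcases hCpart (s α γ) hsγ with h | h
      · exact Or.inl ⟨s α γ, h, hinvol γ⟩
      · exact Or.inr ⟨-(s α γ), h, by rw [map_neg, hinvol]⟩
    have hdisj' : ∀ γ, γ ∈ C' → -γ ∈ C' → False := by
      rintro γ ⟨y₁, hy₁, e₁⟩ ⟨y₂, hy₂, e₂⟩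
      have hy21 : y₂ = -y₁ := by
        apply (s α).injective
        rw [e₂, map_neg, e₁]
      exact hCdisj y₁ hy₁ (hy21 ▸ hy₂)
    have hcard' : (C' ∩ negRoots Φ Δ).ncard ≤ n := by
      have hsubset : C' ∩ negRoots Φ Δ ⊆ ⇑(s α) '' ((C ∩ negRoots Φ Δ) \ {-α}) := by
        rintro x ⟨⟨y, hyC, rfl⟩, hxneg⟩
        have hxne : s α y ≠ -α := by
          intro h
          have hy_eq : y = α := by
            have h' := congrArg (s α) h
            rw [hinvol, map_neg, rs_s_self hΦ hs hαΦ, neg_neg] at h'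
            exact h'
          exact hCdisj α (hy_eq ▸ hyC) hαC
        have hyneg : y ∈ negRoots Φ Δ := by
          have := rs_s_perm_neg hΦ hΔ hs hαΔ hxneg hxne
          rwa [hinvol] at this
        have hyne : y ≠ -α := by
          intro h
          rw [h, map_neg, rs_s_self hΦ hs hαΦ, neg_neg] at hxneg
          exact rs_not_pos_and_neg hΦ hΔ hαpos hxneg
        exact ⟨y, ⟨⟨hyC, hyneg⟩, hyne⟩, rfl⟩
      have hfin2 : ((C ∩ negRoots Φ Δ) \ {-α}).Finite := hfin.diff
      have hmem : -α ∈ C ∩ negRoots Φ Δ := ⟨hαC, rs_neg_of_pos hΦ hαpos⟩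
      calc (C' ∩ negRoots Φ Δ).ncard
          ≤ (⇑(s α) '' ((C ∩ negRoots Φ Δ) \ {-α})).ncard :=
            Set.ncard_le_ncard hsubset (hfin2.image _)
        _ = ((C ∩ negRoots Φ Δ) \ {-α}).ncard :=
            Set.ncard_image_of_injective _ (s α).injective
        _ = (C ∩ negRoots Φ Δ).ncard - 1 := Set.ncard_diff_singleton_of_mem hmem
        _ ≤ n := by
            have h1 : 0 < (C ∩ negRoots Φ Δ).ncard :=
              (Set.ncard_pos hfin).2 ⟨γ₀, hγ₀C, hγ₀neg⟩
            omega
    obtain ⟨u, huW, huC⟩ := ih C' hsub' hcl' hpart' hdisj' hcard'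
    refine ⟨u * s α, mul_mem huW (Subgroup.subset_closure ⟨α, hαL, rfl⟩), ?_⟩
    show ⇑(u * s α) '' C = _
    rw [show ⇑(u * s α) = ⇑u ∘ ⇑(s α) from rfl, Set.image_comp]
    exact huC

end Part6
/-- For `I, L ⊆ Π` and `w ∈ W` with `w⁻¹(Φ_L) ∩ Φ_I = ∅`, the set
`C := w(Φ⁺ \ Φ_I) ∩ Φ_L` is a closed subset of `Φ_L` whose union with its negative is a
partition of `Φ_L`, and there exists a unique `w' ∈ W_L` with `w'(C) = Φ_L⁺`. -/
theorem statement11 (Φ Δ : Set V) (hΦ : IsRootSystem Φ) (hΔ : IsBase Φ Δ)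
    (s : V → V ≃ₗ[ℝ] V) (hs : IsReflectionFamily Φ s)
    (I L : Set V) (hI : I ⊆ Δ) (hL : L ⊆ Δ)
    (w : V ≃ₗ[ℝ] V) (hw : w ∈ weylGroupOf Φ s)
    (hfree : ⇑w⁻¹ '' rootsIn Φ L ∩ rootsIn Φ I = ∅) :
    IsClosedSubset (rootsIn Φ L) (⇑w '' (posRoots Φ Δ \ rootsIn Φ I) ∩ rootsIn Φ L) ∧
    (⇑w '' (posRoots Φ Δ \ rootsIn Φ I) ∩ rootsIn Φ L) ∪
      ((fun α => -α) '' (⇑w '' (posRoots Φ Δ \ rootsIn Φ I) ∩ rootsIn Φ L)) =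
        rootsIn Φ L ∧
    (⇑w '' (posRoots Φ Δ \ rootsIn Φ I) ∩ rootsIn Φ L) ∩
      ((fun α => -α) '' (⇑w '' (posRoots Φ Δ \ rootsIn Φ I) ∩ rootsIn Φ L)) = ∅ ∧
    (∃! w' : V ≃ₗ[ℝ] V, w' ∈ weylGroupOf L s ∧
      ⇑w' '' (⇑w '' (posRoots Φ Δ \ rootsIn Φ I) ∩ rootsIn Φ L) = posRootsIn Φ Δ L) := by
    classical
  have hLΦ : L ⊆ Φ := fun x hx => hΔ.subset (hL hx)
  set C : Set V := ⇑w '' (posRoots Φ Δ \ rootsIn Φ I) ∩ rootsIn Φ L with hC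
  have hwinv : w⁻¹ ∈ weylGroupOf Φ s := inv_mem hw
  have hcoe : ∀ (u : V ≃ₗ[ℝ] V) (x : V), ⇑u⁻¹ x = u.symm x := fun _ _ => rfl
  have hw_inv_apply : ∀ x, w (⇑w⁻¹ x) = x := fun x => w.apply_symm_apply x
  have hinv_w_apply : ∀ x, ⇑w⁻¹ (w x) = x := fun x => w.symm_apply_apply x
  have hfree' : ∀ x ∈ rootsIn Φ L, ⇑w⁻¹ x ∉ rootsIn Φ I := by
    intro x hx hmem
    have h1 : ⇑w⁻¹ x ∈ ⇑w⁻¹ '' rootsIn Φ L ∩ rootsIn Φ I := ⟨⟨x, hx, rfl⟩, hmem⟩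
    rw [hfree] at h1
    exact Set.notMem_empty _ h1
  have hclosed : IsClosedSubset (rootsIn Φ L) C := by
    rintro x₁ ⟨⟨a, ⟨hapos, haI⟩, rfl⟩, hx₁L⟩ x₂ ⟨⟨b, ⟨hbpos, hbI⟩, rfl⟩, hx₂L⟩ hsum
    have hab : w (a + b) = w a + w b := map_add _ _ _
    have habΦ : a + b ∈ Φ := by
      have h1 := rs_weyl_root hΦ hs subset_rfl hwinv hsum.1
      rwa [← hab, hinv_w_apply] at h1
    have habpos : a + b ∈ posRoots Φ Δ := ⟨habΦ, rs_nonneg_add hapos.2 hbpos.2⟩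
    have habI : a + b ∉ rootsIn Φ I := by
      intro hmem
      have h2 := hfree' (w a + w b) hsum
      rw [← hab, hinv_w_apply] at h2
      exact h2 hmem
    exact ⟨⟨a + b, ⟨habpos, habI⟩, hab⟩, hsum⟩
  have hrootsIn_neg : ∀ {A : Set V} {x : V}, x ∈ rootsIn Φ A → -x ∈ rootsIn Φ A :=
    fun h => ⟨rs_neg_mem hΦ h.1, Submodule.neg_mem _ h.2⟩
  have hunion : C ∪ (fun α => -α) '' C = rootsIn Φ L := by
    apply Set.Subset.antisymm
    · intro x hx
      rcases hx with hx | ⟨y, hy, rfl⟩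
      · exact hx.2
      · exact hrootsIn_neg hy.2
    · intro γ hγ
      have hδΦ : ⇑w⁻¹ γ ∈ Φ := rs_weyl_root hΦ hs subset_rfl hwinv hγ.1
      have hδI : ⇑w⁻¹ γ ∉ rootsIn Φ I := hfree' γ hγ
      rcases rs_pos_or_neg hΦ hΔ hδΦ with h | h
      · exact Or.inl ⟨⟨⇑w⁻¹ γ, ⟨h, hδI⟩, hw_inv_apply γ⟩, hγ⟩
      · refine Or.inr ?_
        have hnγ : -γ ∈ rootsIn Φ L := hrootsIn_neg hγ
        have h1 : ⇑w⁻¹ (-γ) = -(⇑w⁻¹ γ) := map_neg _ γ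
        have h2 : ⇑w⁻¹ (-γ) ∈ posRoots Φ Δ := by rw [h1]; exact rs_pos_of_neg hΦ h
        have h3 : ⇑w⁻¹ (-γ) ∉ rootsIn Φ I := hfree' (-γ) hnγ
        exact ⟨-γ, ⟨⟨⇑w⁻¹ (-γ), ⟨h2, h3⟩, hw_inv_apply (-γ)⟩, hnγ⟩, neg_neg γ⟩
  have hdisj : ∀ γ, γ ∈ C → -γ ∈ C → False := by
    rintro γ ⟨⟨a, ⟨hapos, haI⟩, ha⟩, hγL⟩ ⟨⟨b, ⟨hbpos, hbI⟩, hb⟩, hnγL⟩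
    have hba : b = -a := by
      apply w.injective
      rw [hb, map_neg, ha]
    have haneg : a ∈ negRoots Φ Δ := ⟨hapos.1, hba ▸ hbpos.2⟩
    exact rs_not_pos_and_neg hΦ hΔ hapos haneg
  have hdisj_set : C ∩ (fun α => -α) '' C = ∅ := by
    apply Set.eq_empty_iff_forall_notMem.2
    rintro x ⟨hx, y, hy, hyx⟩
    exact hdisj x hx (by rw [← hyx, neg_neg]; exact hy)
  have hCpart : ∀ γ ∈ rootsIn Φ L, γ ∈ C ∨ -γ ∈ C := by
    intro γ hγ
    rw [← hunion] at hγ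
    rcases hγ with h | ⟨y, hy, hyx⟩
    · exact Or.inl h
    · exact Or.inr (by rw [← hyx, neg_neg]; exact hy)
  have hCsub : C ⊆ rootsIn Φ L := Set.inter_subset_right
  obtain ⟨w', hw'W, hw'C⟩ := rs_exists_pos hΦ hΔ hs hL ((C ∩ negRoots Φ Δ).ncard) C hCsub
    hclosed hCpart hdisj le_rfl
  refine ⟨hclosed, hunion, hdisj_set, ⟨w', ⟨hw'W, hw'C⟩, ?_⟩⟩
  rintro v ⟨hvW, hvC⟩
  have huW : v * w'⁻¹ ∈ weylGroupOf L s := mul_mem hvW (inv_mem hw'W)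
  have huP : ∀ γ ∈ posRootsIn Φ Δ L, (v * w'⁻¹) γ ∈ posRootsIn Φ Δ L := by
    intro γ hγ
    rw [← hw'C] at hγ
    obtain ⟨y, hy, rfl⟩ := hγ
    have h1 : (v * w'⁻¹) (w' y) = v y := by
      show v (⇑w'⁻¹ (w' y)) = v y
      rw [hcoe w', w'.symm_apply_apply]
    rw [h1, ← hvC]
    exact ⟨y, hy, rfl⟩
  exact mul_inv_eq_one.1 (rs_stab hΦ hΔ hs hL huW huP)
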